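/- If x is a generic point for a Φ-invariant ergodic measure μ and ρ̃_FK(x,y) = 0, then y is also a generic point for μ. -/

import Mathlib

open MeasureTheory Filter Set Topology
open scoped ENNReal symmDiff

section FK

structure IsFlow {X : Type*} [TopologicalSpace X] (Φ : ℝ → X → X) : Prop where
  cont : Continuous fun p : ℝ × X => Φ p.1 p.2
  map_zero : ∀ x, Φ 0 x = x
  map_add : ∀ t s x, Φ (t + s) x = Φ s (Φ t x)

variable {X : Type*} [MetricSpace X]

/-- `x` and `y` are `(t,ε,δ)`-matchable: there are measurable `A, A' ⊆ [0,t]` of Lebesgue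
measure `> (1-ε)t` and an increasing absolutely continuous onto map `h : A → A'`
(with a.e. derivative `h'`) with `|h' - 1| < ε` and `d(φ^s x, φ^{h s} y) < δ` on `A`. -/
def Matchable (Φ : ℝ → X → X) (x y : X) (t ε δ : ℝ) : Prop :=
  ∃ (A A' : Set ℝ) (h h' : ℝ → ℝ),
    MeasurableSet A ∧ MeasurableSet A' ∧
    A ⊆ Icc 0 t ∧ A' ⊆ Icc 0 t ∧
    ENNReal.ofReal ((1 - ε) * t) < volume A ∧
    ENNReal.ofReal ((1 - ε) * t) < volume A' ∧
    MapsTo h A A' ∧ SurjOn h A A' ∧ StrictMonoOn h A ∧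
    (∀ B ⊆ A, MeasurableSet B → volume (h '' B) = ENNReal.ofReal (∫ s in B, h' s)) ∧
    (∀ s ∈ A, |h' s - 1| < ε) ∧
    (∀ s ∈ A, dist (Φ s x) (Φ (h s) y) < δ)

/-- The `(t,δ)`-gap `f̃_{t,δ}(x,y)`; by convention it equals `1` when no matching exists. -/
noncomputable def fkGap (Φ : ℝ → X → X) (t δ : ℝ) (x y : X) : ℝ :=
  sInf ({ε : ℝ | 0 < ε ∧ Matchable Φ x y t ε δ} ∪ {1})

/-- `f̃_δ(x,y) = limsup_{t → ∞} f̃_{t,δ}(x,y)`. -/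
noncomputable def fkDist (Φ : ℝ → X → X) (δ : ℝ) (x y : X) : ℝ :=
  Filter.limsup (fun t => fkGap Φ t δ x y) Filter.atTop

/-- The Feldman–Katok pseudometric for flows. -/
noncomputable def rhoFK (Φ : ℝ → X → X) (x y : X) : ℝ :=
  sInf {δ : ℝ | 0 < δ ∧ fkDist Φ δ x y < δ}

/-- Discrete `(n,δ)`-matching of cardinality `k` for a map `T`. -/
def DMatching (T : X → X) (x y : X) (n : ℕ) (δ : ℝ) (k : ℕ) : Prop :=
  ∃ (D D' : Finset ℕ) (π : ℕ → ℕ),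
    D ⊆ Finset.range n ∧ D' ⊆ Finset.range n ∧ D.card = k ∧
    Set.BijOn π ↑D ↑D' ∧ StrictMonoOn π ↑D ∧
    ∀ i ∈ D, dist (T^[i] x) (T^[π i] y) < δ

/-- The discrete `(n,δ)`-gap `f̄_{n,δ}(x,y)`. -/
noncomputable def dGap (T : X → X) (n : ℕ) (δ : ℝ) (x y : X) : ℝ :=
  1 - ((sSup {k : ℕ | DMatching T x y n δ k} : ℕ) : ℝ) / n

/-- `f̄_δ(x,y) = limsup_{n → ∞} f̄_{n,δ}(x,y)`. -/
noncomputable def dFKdist (T : X → X) (δ : ℝ) (x y : X) : ℝ :=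
  Filter.limsup (fun n : ℕ => dGap T n δ x y) Filter.atTop

/-- The discrete Feldman–Katok pseudometric. -/
noncomputable def dRhoFK (T : X → X) (x y : X) : ℝ :=
  sInf {δ : ℝ | 0 < δ ∧ dFKdist T δ x y ≤ δ}

variable [MeasurableSpace X] [BorelSpace X]

/-- The `t`-empirical measure `μ_{x,t} = (1/t) ∫_0^t δ_{φ^s x} ds`. -/
noncomputable def empMeasure (Φ : ℝ → X → X) (x : X) (t : ℝ) : Measure X :=
  (ENNReal.ofReal (1 / t)) • Measure.map (fun s => Φ s x) (volume.restrict (Icc 0 t))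

/-- `x` is generic for `μ`: empirical measures converge to `μ` in the weak* topology. -/
def Generic (Φ : ℝ → X → X) (μ : Measure X) (x : X) : Prop :=
  ∀ f : C(X, ℝ), Tendsto (fun t => ∫ z, f z ∂(empMeasure Φ x t)) atTop (𝓝 (∫ z, f z ∂μ))

def FlowInvariant (Φ : ℝ → X → X) (μ : Measure X) : Prop :=
  ∀ t : ℝ, MeasurePreserving (Φ t) μ μ

def FlowErgodic (Φ : ℝ → X → X) (μ : Measure X) : Prop :=
  FlowInvariant Φ μ ∧
    ∀ A : Set X, MeasurableSet A → (∀ t, Φ t ⁻¹' A = A) → μ A = 0 ∨ μ A = 1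

/-- The Prokhorov metric. -/
noncomputable def prokhorov (μ ν : Measure X) : ℝ :=
  sInf {ε : ℝ | 0 < ε ∧ ∀ B : Set X, MeasurableSet B →
    μ B ≤ ν (Metric.thickening ε B) + ENNReal.ofReal ε}

/-- A finite Borel partition of `X`, indexed by `ℕ` with all but finitely many cells empty. -/
structure BPartition (X : Type*) [MeasurableSpace X] where
  cells : ℕ → Set X
  measurable : ∀ j, MeasurableSet (cells j)
  disj : Pairwise (Function.onFun Disjoint cells)
  cover : ⋃ j, cells j = Set.univ
  finite : ∃ n, ∀ j, n ≤ j → cells j = ∅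

/-- The partition pseudometric `d_μ(P,Q)` (infimum over orderings of
`μ {x : P(x) ≠ Q(x)}`). -/
noncomputable def dPart (μ : Measure X) (P Q : ℕ → Set X) : ℝ :=
  ⨅ σ : Equiv.Perm ℕ, (μ (⋃ j, P j \ Q (σ j))).toReal

/-- `(t,ε,P)`-matchability with respect to a partition `P` (Ratner). -/
def PMatchable (Φ : ℝ → X → X) (P : ℕ → Set X) (x y : X) (t ε : ℝ) : Prop :=
  ∃ (A A' : Set ℝ) (h h' : ℝ → ℝ),
    MeasurableSet A ∧ MeasurableSet A' ∧
    A ⊆ Icc 0 t ∧ A' ⊆ Icc 0 t ∧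
    ENNReal.ofReal ((1 - ε) * t) < volume A ∧
    ENNReal.ofReal ((1 - ε) * t) < volume A' ∧
    MapsTo h A A' ∧ SurjOn h A A' ∧ StrictMonoOn h A ∧
    (∀ B ⊆ A, MeasurableSet B → volume (h '' B) = ENNReal.ofReal (∫ s in B, h' s)) ∧
    (∀ s ∈ A, |h' s - 1| < ε) ∧
    (∀ s ∈ A, ∀ j, Φ s x ∈ P j ↔ Φ (h s) y ∈ P j)

/-- `f_t(x,y,P)`. -/
noncomputable def fPart (Φ : ℝ → X → X) (P : ℕ → Set X) (t : ℝ) (x y : X) : ℝ :=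
  sInf ({ε : ℝ | 0 < ε ∧ PMatchable Φ P x y t ε} ∪ {1})

/-- The `(t,P)`-ball of radius `ε` centered at `x`. -/
def PBall (Φ : ℝ → X → X) (P : ℕ → Set X) (t ε : ℝ) (x : X) : Set X :=
  {y | fPart Φ P t x y < ε}

/-- `K_t(ε,P)`: minimal cardinality of an `(ε,t,P)`-cover (`⊤` if none exists). -/
noncomputable def Kt (μ : Measure X) (Φ : ℝ → X → X) (P : ℕ → Set X) (ε t : ℝ) : ℝ≥0∞ :=
  sInf ((fun C : Finset X => (C.card : ℝ≥0∞)) ''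
    {C : Finset X | ENNReal.ofReal (1 - ε) < μ (⋃ x ∈ C, PBall Φ P t ε x)})

/-- `β(u,ε,P) = liminf_{t→∞} log K_t(ε,P) / u(t)`. -/
noncomputable def betaU (μ : Measure X) (Φ : ℝ → X → X) (P : ℕ → Set X) (u : ℝ → ℝ)
    (ε : ℝ) : EReal :=
  Filter.liminf (fun t => ENNReal.log (Kt μ Φ P ε t) / (ENNReal.ofReal (u t) : EReal))
    Filter.atTop

/-- `e(u,P) = limsup_{ε→0⁺} β(u,ε,P)`. -/
noncomputable def eUP (μ : Measure X) (Φ : ℝ → X → X) (P : ℕ → Set X) (u : ℝ → ℝ) : EReal :=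
  Filter.limsup (fun ε => betaU μ Φ P u ε) (𝓝[>] (0 : ℝ))

/-- `e(Φ,u) = sup_P e(u,P)`. -/
noncomputable def ePhi (μ : Measure X) (Φ : ℝ → X → X) (u : ℝ → ℝ) : EReal :=
  ⨆ P : BPartition X, eUP μ Φ P.cells u

end FK



lemma exists_monotone_ext {t : ℝ} (ht : 0 ≤ t) {A : Set ℝ} {h : ℝ → ℝ}
    (hmono : StrictMonoOn h A) (hrange : ∀ s ∈ A, h s ∈ Icc 0 t) :
    ∃ H : ℝ → ℝ, Monotone H ∧ ∀ s ∈ A, H s = h s := by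
  refine ⟨fun u => sSup (insert 0 (h '' (A ∩ Iic u))), ?_, ?_⟩
  · intro u v huv
    apply csSup_le_csSup
    · refine ⟨t, ?_⟩
      rintro z (rfl | ⟨s, ⟨hsA, _⟩, rfl⟩)
      · exact ht
      · exact (hrange s hsA).2
    · exact ⟨0, mem_insert _ _⟩
    · exact insert_subset_insert (image_mono (inter_subset_inter_right _ (Iic_subset_Iic.mpr huv)))
  · intro a ha
    apply IsGreatest.csSup_eq
    constructor
    · exact mem_insert_of_mem _ ⟨a, ⟨ha, le_refl a⟩, rfl⟩
    · rintro z (rfl | ⟨s, ⟨hsA, hsa⟩, rfl⟩)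
      · exact (hrange a ha).1
      · exact hmono.monotoneOn hsA ha hsa

section KeyEst

variable {X : Type*} [MetricSpace X] [MeasurableSpace X] [BorelSpace X]

lemma fkGap_nonneg (Φ : ℝ → X → X) (t δ : ℝ) (x y : X) : 0 ≤ fkGap Φ t δ x y := by
  apply Real.sInf_nonneg
  rintro e (⟨he, -⟩ | rfl)
  · exact he.le
  · exact zero_le_one

lemma fkGap_le_one (Φ : ℝ → X → X) (t δ : ℝ) (x y : X) : fkGap Φ t δ x y ≤ 1 := by
  apply csInf_le
  · refine ⟨0, ?_⟩
    rintro e (⟨he, -⟩ | rfl)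
    · exact he.le
    · exact zero_le_one
  · exact mem_union_right _ rfl

lemma key_est (Φ : ℝ → X → X) (hΦ : Continuous fun p : ℝ × X => Φ p.1 p.2)
    (f : X → ℝ) (hf : Continuous f) {x y : X} {M η δ ε t : ℝ}
    (hM0 : 0 ≤ M) (hM : ∀ z, |f z| ≤ M)
    (hmod : ∀ a b : X, dist a b < δ → |f a - f b| ≤ η) (hη0 : 0 ≤ η)
    (hε0 : 0 < ε) (hε1 : ε < 1) (ht : 0 < t)
    (hm : Matchable Φ x y t ε δ) :
    |(∫ s in Icc 0 t, f (Φ s y)) - ∫ s in Icc 0 t, f (Φ s x)| ≤ t * (η + 5 * M * ε) := by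
  obtain ⟨A, A', h, h', hAmeas, hA'meas, hAsub, hA'sub, hvolA, hvolA', hmaps, hsurj, hsmono,
    hderiv, hd1, hdist⟩ := hm
  have hcx : Continuous fun s : ℝ => Φ s x := hΦ.comp (continuous_id.prodMk continuous_const)
  have hcy : Continuous fun s : ℝ => Φ s y := hΦ.comp (continuous_id.prodMk continuous_const)
  have hIccvol : volume (Icc (0:ℝ) t) = ENNReal.ofReal t := by simp [Real.volume_Icc]
  have hAle : volume A ≤ ENNReal.ofReal t := hIccvol ▸ measure_mono hAsub
  have hA'le : volume A' ≤ ENNReal.ofReal t := hIccvol ▸ measure_mono hA'sub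
  have hAfin : volume A ≠ ⊤ := (lt_of_le_of_lt hAle ENNReal.ofReal_lt_top).ne
  have hA'fin : volume A' ≠ ⊤ := (lt_of_le_of_lt hA'le ENNReal.ofReal_lt_top).ne
  set a := (volume A).toReal with ha_def
  set a' := (volume A').toReal with ha'_def
  have ha_le : a ≤ t := ENNReal.toReal_le_of_le_ofReal ht.le hAle
  have ha'_le : a' ≤ t := ENNReal.toReal_le_of_le_ofReal ht.le hA'le
  have h1εt : 0 ≤ (1 - ε) * t := by nlinarith
  have ha_gt : (1 - ε) * t < a := by
    have := (ENNReal.toReal_lt_toReal ENNReal.ofReal_ne_top hAfin).mpr hvolA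
    rwa [ENNReal.toReal_ofReal h1εt] at this
  have ha'_gt : (1 - ε) * t < a' := by
    have := (ENNReal.toReal_lt_toReal ENNReal.ofReal_ne_top hA'fin).mpr hvolA'
    rwa [ENNReal.toReal_ofReal h1εt] at this
  -- integrability of h'
  have hintA : IntegrableOn h' A := by
    by_contra hni
    have h0 : ∫ s in A, h' s = 0 := integral_undef hni
    have h1 : volume (h '' A) = 0 := by
      rw [hderiv A (subset_refl A) hAmeas, h0, ENNReal.ofReal_zero]
    have h2 : h '' A = A' := subset_antisymm hmaps.image_subset hsurj
    rw [h2] at h1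
    have hpos : (0:ℝ≥0∞) < ENNReal.ofReal ((1 - ε) * t) := ENNReal.ofReal_pos.mpr (by nlinarith)
    exact absurd h1 (lt_trans hpos hvolA').ne'
  -- image measure bounds
  have himg_bnd : ∀ B ⊆ A, MeasurableSet B →
      ENNReal.ofReal (1 - ε) * volume B ≤ volume (h '' B) ∧
      volume (h '' B) ≤ ENNReal.ofReal (1 + ε) * volume B := by
    intro B hBA hBmeas
    have hBfin : volume B ≠ ⊤ := (lt_of_le_of_lt (measure_mono hBA) hAfin.lt_top).ne
    have hBint : IntegrableOn h' B := hintA.mono_set hBA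
    have hconst : ∀ (c : ℝ), IntegrableOn (fun _ => c) B := fun c =>
      integrableOn_const hBfin
    have hub : ∫ s in B, h' s ≤ (1 + ε) * (volume B).toReal := by
      calc ∫ s in B, h' s ≤ ∫ _ in B, (1 + ε) :=
            setIntegral_mono_on hBint (hconst _) hBmeas (fun s hs => by
              have := abs_lt.mp (hd1 s (hBA hs)); linarith)
        _ = (volume B).toReal * (1 + ε) := by rw [setIntegral_const]; rfl
        _ = (1 + ε) * (volume B).toReal := by ring
    have hlb : (1 - ε) * (volume B).toReal ≤ ∫ s in B, h' s := by
      calc (1 - ε) * (volume B).toReal = (volume B).toReal * (1 - ε) := by ring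
        _ = ∫ _ in B, (1 - ε) := by rw [setIntegral_const]; rfl
        _ ≤ ∫ s in B, h' s :=
            setIntegral_mono_on (hconst _) hBint hBmeas (fun s hs => by
              have := abs_lt.mp (hd1 s (hBA hs)); linarith)
    rw [hderiv B hBA hBmeas]
    constructor
    · calc ENNReal.ofReal (1 - ε) * volume B
          = ENNReal.ofReal ((1 - ε) * (volume B).toReal) := by
            rw [ENNReal.ofReal_mul (by linarith), ENNReal.ofReal_toReal hBfin]
        _ ≤ ENNReal.ofReal (∫ s in B, h' s) := ENNReal.ofReal_le_ofReal hlb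
    · calc ENNReal.ofReal (∫ s in B, h' s)
          ≤ ENNReal.ofReal ((1 + ε) * (volume B).toReal) := ENNReal.ofReal_le_ofReal hub
        _ = ENNReal.ofReal (1 + ε) * volume B := by
            rw [ENNReal.ofReal_mul (by linarith), ENNReal.ofReal_toReal hBfin]
  -- monotone extension H of h
  have hrange : ∀ s ∈ A, h s ∈ Icc 0 t := fun s hs => hA'sub (hmaps hs)
  obtain ⟨H, hHmono, hHeq⟩ := exists_monotone_ext ht.le hsmono hrange
  have hHmeas : Measurable H := hHmono.measurable
  set ν1 : Measure ℝ := Measure.map H (volume.restrict A) with hν1_def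
  set ν2 : Measure ℝ := volume.restrict A' with hν2_def
  have hres : ∀ B' : Set ℝ, MeasurableSet B' → ν1 B' = volume (H ⁻¹' B' ∩ A) := by
    intro B' hB'
    rw [hν1_def, Measure.map_apply hHmeas hB', Measure.restrict_apply (hHmeas hB')]
  have himg : ∀ B' : Set ℝ, h '' (H ⁻¹' B' ∩ A) = B' ∩ A' := by
    intro B'
    ext u
    constructor
    · rintro ⟨s, ⟨hsB, hsA⟩, rfl⟩
      exact ⟨by rw [mem_preimage, hHeq s hsA] at hsB; exact hsB, hmaps hsA⟩
    · rintro ⟨huB, huA'⟩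
      obtain ⟨s, hsA, rfl⟩ := hsurj huA'
      exact ⟨s, ⟨by rw [mem_preimage, hHeq s hsA]; exact huB, hsA⟩, rfl⟩
  have hle_ub : ν2 ≤ ENNReal.ofReal (1 + ε) • ν1 := by
    rw [Measure.le_iff]
    intro B' hB'
    have hBm : MeasurableSet (H ⁻¹' B' ∩ A) := (hHmeas hB').inter hAmeas
    calc ν2 B' = volume (B' ∩ A') := Measure.restrict_apply hB'
      _ = volume (h '' (H ⁻¹' B' ∩ A)) := by rw [himg B']
      _ ≤ ENNReal.ofReal (1 + ε) * volume (H ⁻¹' B' ∩ A) :=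
          (himg_bnd _ inter_subset_right hBm).2
      _ = (ENNReal.ofReal (1 + ε) • ν1) B' := by
          rw [Measure.smul_apply, hres B' hB', smul_eq_mul]
  have hle_lb : ENNReal.ofReal (1 - ε) • ν1 ≤ ν2 := by
    rw [Measure.le_iff]
    intro B' hB'
    have hBm : MeasurableSet (H ⁻¹' B' ∩ A) := (hHmeas hB').inter hAmeas
    calc (ENNReal.ofReal (1 - ε) • ν1) B'
        = ENNReal.ofReal (1 - ε) * volume (H ⁻¹' B' ∩ A) := by
          rw [Measure.smul_apply, hres B' hB', smul_eq_mul]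
      _ ≤ volume (h '' (H ⁻¹' B' ∩ A)) := (himg_bnd _ inter_subset_right hBm).1
      _ = volume (B' ∩ A') := by rw [himg B']
      _ = ν2 B' := (Measure.restrict_apply hB').symm
  -- the test function g
  set g : ℝ → ℝ := fun u => f (Φ u y) + M with hg_def
  have hgc : Continuous g := (hf.comp hcy).add continuous_const
  have hg0 : ∀ u, 0 ≤ g u := fun u => by have := abs_le.mp (hM (Φ u y)); simp [hg_def]; linarith
  have hg2 : ∀ u, g u ≤ 2 * M := fun u => by have := abs_le.mp (hM (Φ u y)); simp [hg_def]; linarith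
  -- integrability
  have hfy_int : IntegrableOn (fun u => f (Φ u y)) A' :=
    ((hf.comp hcy).integrableOn_Icc).mono_set hA'sub
  have hfx_int : IntegrableOn (fun s => f (Φ s x)) A :=
    ((hf.comp hcx).integrableOn_Icc).mono_set hAsub
  have hfx_int_Icc : IntegrableOn (fun s => f (Φ s x)) (Icc 0 t) := (hf.comp hcx).integrableOn_Icc
  have hfy_int_Icc : IntegrableOn (fun s => f (Φ s y)) (Icc 0 t) := (hf.comp hcy).integrableOn_Icc
  haveI : IsFiniteMeasure (volume.restrict A) :=
    ⟨by rw [Measure.restrict_apply_univ]; exact lt_of_le_of_lt hAle ENNReal.ofReal_lt_top⟩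
  have hgi2 : Integrable g ν2 := (hgc.integrableOn_Icc).mono_set hA'sub
  have hgH : Integrable (fun s => g (H s)) (volume.restrict A) := by
    refine Integrable.mono (integrable_const (2 * M)) ((hgc.measurable.comp hHmeas).aestronglyMeasurable) ?_
    filter_upwards with s
    rw [Real.norm_eq_abs, Real.norm_eq_abs, abs_of_nonneg (hg0 _)]
    exact le_trans (hg2 _) (le_abs_self _)
  have hgi1 : Integrable g ν1 :=
    (integrable_map_measure hgc.aestronglyMeasurable hHmeas.aemeasurable).mpr hgH
  -- integral identities
  have hI1 : ∫ u, g u ∂ν1 = ∫ s in A, g (H s) :=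
    integral_map hHmeas.aemeasurable hgc.aestronglyMeasurable
  have hI2 : ∫ u, g u ∂ν2 = (∫ u in A', f (Φ u y)) + M * a' := by
    rw [hν2_def]
    show ∫ u in A', (f (Φ u y) + M) = _
    rw [integral_add hfy_int (integrableOn_const hA'fin),
      setIntegral_const, smul_eq_mul, measureReal_def]
    ring
  -- comparison of integrals
  have hub : ∫ u, g u ∂ν2 ≤ (1 + ε) * ∫ u, g u ∂ν1 := by
    have h1 := integral_mono_measure hle_ub (Filter.Eventually.of_forall hg0)
      (hgi1.smul_measure ENNReal.ofReal_ne_top)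
    rwa [integral_smul_measure, ENNReal.toReal_ofReal (by linarith), smul_eq_mul] at h1
  have hlb : (1 - ε) * ∫ u, g u ∂ν1 ≤ ∫ u, g u ∂ν2 := by
    have h1 := integral_mono_measure hle_lb (Filter.Eventually.of_forall hg0) hgi2
    rwa [integral_smul_measure, ENNReal.toReal_ofReal (by linarith), smul_eq_mul] at h1
  have hg1_nonneg : 0 ≤ ∫ u, g u ∂ν1 := integral_nonneg hg0
  have hg1_le : ∫ u, g u ∂ν1 ≤ 2 * M * t := by
    rw [hI1]
    calc ∫ s in A, g (H s) ≤ ∫ _ in A, (2 * M) :=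
          setIntegral_mono_on hgH (integrableOn_const hAfin) hAmeas
            (fun s _ => hg2 _)
      _ = a * (2 * M) := by rw [setIntegral_const]; rfl
      _ ≤ 2 * M * t := by nlinarith
  have hiv : |(∫ u, g u ∂ν2) - ∫ u, g u ∂ν1| ≤ 2 * M * ε * t := by
    rw [abs_le]
    constructor
    · nlinarith [mul_le_mul_of_nonneg_left hg1_le hε0.le]
    · nlinarith [mul_le_mul_of_nonneg_left hg1_le hε0.le]
  -- step (iii)
  have hiii : |(∫ s in A, g (H s)) - ((∫ s in A, f (Φ s x)) + M * a)| ≤ η * t := by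
    have heq1 : (∫ s in A, f (Φ s x)) + M * a = ∫ s in A, (f (Φ s x) + M) := by
      rw [integral_add hfx_int (integrableOn_const hAfin),
        setIntegral_const, smul_eq_mul, measureReal_def]
      ring
    have hsub_int : IntegrableOn (fun s => f (Φ s x) + M) A :=
      hfx_int.add (integrableOn_const hAfin)
    rw [heq1, ← integral_sub hgH hsub_int, ← Real.norm_eq_abs]
    have hbnd : ∀ s ∈ A, ‖g (H s) - (f (Φ s x) + M)‖ ≤ η := by
      intro s hs
      rw [Real.norm_eq_abs]
      have heq2 : g (H s) - (f (Φ s x) + M) = f (Φ (h s) y) - f (Φ s x) := by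
        rw [hg_def]; simp only []; rw [hHeq s hs]; ring
      rw [heq2, abs_sub_comm]
      exact hmod _ _ (hdist s hs)
    calc ‖∫ s in A, (g (H s) - (f (Φ s x) + M))‖
        ≤ η * a := norm_setIntegral_le_of_norm_le_const hAfin.lt_top hbnd
      _ ≤ η * t := by nlinarith
  -- steps (i) and (ii): complements
  have hcomp : ∀ (B : Set ℝ), MeasurableSet B → B ⊆ Icc 0 t → ENNReal.ofReal ((1-ε)*t) < volume B →
      ∀ (F : ℝ → ℝ), IntegrableOn F (Icc 0 t) → (∀ s, |F s| ≤ M) →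
      |(∫ s in Icc 0 t, F s) - ∫ s in B, F s| ≤ M * (ε * t) := by
    intro B hBmeas hBsub hBvol F hFint hFbnd
    have hBfin : volume B ≠ ⊤ :=
      (lt_of_le_of_lt (hIccvol ▸ measure_mono hBsub) ENNReal.ofReal_lt_top).ne
    have hdiff := integral_diff hBmeas hFint hBsub
    have hvd : volume (Icc 0 t \ B) ≤ ENNReal.ofReal (ε * t) := by
      rw [measure_diff hBsub hBmeas.nullMeasurableSet hBfin, hIccvol]
      calc ENNReal.ofReal t - volume B
          ≤ ENNReal.ofReal t - ENNReal.ofReal ((1 - ε) * t) := tsub_le_tsub_left hBvol.le _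
        _ = ENNReal.ofReal (t - (1 - ε) * t) := (ENNReal.ofReal_sub t h1εt).symm
        _ = ENNReal.ofReal (ε * t) := by ring_nf
    have hvdr : (volume (Icc 0 t \ B)).toReal ≤ ε * t :=
      ENNReal.toReal_le_of_le_ofReal (by positivity) hvd
    rw [← hdiff, ← Real.norm_eq_abs]
    calc ‖∫ s in Icc 0 t \ B, F s‖
        ≤ M * (volume (Icc 0 t \ B)).toReal :=
          norm_setIntegral_le_of_norm_le_const
            (lt_of_le_of_lt hvd ENNReal.ofReal_lt_top)
            (fun s _ => by rw [Real.norm_eq_abs]; exact hFbnd s)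
      _ ≤ M * (ε * t) := mul_le_mul_of_nonneg_left hvdr hM0
  have hi : |(∫ s in Icc 0 t, f (Φ s x)) - ∫ s in A, f (Φ s x)| ≤ M * (ε * t) :=
    hcomp A hAmeas hAsub hvolA _ hfx_int_Icc (fun s => hM _)
  have hii : |(∫ s in Icc 0 t, f (Φ s y)) - ∫ s in A', f (Φ s y)| ≤ M * (ε * t) :=
    hcomp A' hA'meas hA'sub hvolA' _ hfy_int_Icc (fun s => hM _)
  -- step (vi)
  have hvi : |M * a - M * a'| ≤ M * (ε * t) := by
    rw [← mul_sub, abs_mul, abs_of_nonneg hM0]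
    have : |a - a'| ≤ ε * t := by
      rw [abs_le]; constructor <;> nlinarith
    exact mul_le_mul_of_nonneg_left this hM0
  -- assemble
  set Ix := ∫ s in Icc 0 t, f (Φ s x) with hIx
  set Iy := ∫ s in Icc 0 t, f (Φ s y) with hIy
  set J := ∫ s in A, f (Φ s x) with hJ
  set J' := ∫ u in A', f (Φ u y) with hJ'
  set G1 := ∫ u, g u ∂ν1 with hG1
  set G2 := ∫ u, g u ∂ν2 with hG2
  have hkey : Iy - Ix = (Iy - J') + (G2 - G1) + ((∫ s in A, g (H s)) - (J + M * a))
      + (M * a - M * a') + (J - Ix) := by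
    rw [hI2, hI1]
    ring
  rw [hkey]
  have t1 := abs_add_le ((Iy - J') + (G2 - G1) + ((∫ s in A, g (H s)) - (J + M * a))
      + (M * a - M * a')) (J - Ix)
  have t2 := abs_add_le ((Iy - J') + (G2 - G1) + ((∫ s in A, g (H s)) - (J + M * a)))
      (M * a - M * a')
  have t3 := abs_add_le ((Iy - J') + (G2 - G1)) ((∫ s in A, g (H s)) - (J + M * a))
  have t4 := abs_add_le (Iy - J') (G2 - G1)
  have hJx : |J - Ix| ≤ M * (ε * t) := by rw [abs_sub_comm]; exact hi
  linarith [hii, hiv, hiii, hvi, hJx, t1, t2, t3, t4]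

end KeyEst

theorem stmt4 {X : Type*} [MetricSpace X] [CompactSpace X] [MeasurableSpace X] [BorelSpace X] (Φ : ℝ → X → X) (hΦ : IsFlow Φ)
    (μ : Measure X) [IsProbabilityMeasure μ] (hμ : FlowErgodic Φ μ)
    (x y : X) (hx : Generic Φ μ x) (h : rhoFK Φ x y = 0) :
    Generic Φ μ y := by
  intro f
  rw [Metric.tendsto_nhds]
  intro η hη
  set L := ∫ z, f z ∂μ with hL
  set M := ‖f‖ with hMdef
  have hM0 : 0 ≤ M := norm_nonneg f
  have hM : ∀ z, |(f : X → ℝ) z| ≤ M := fun z => by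
    rw [← Real.norm_eq_abs]; exact f.norm_coe_le_norm z
  -- uniform continuity
  obtain ⟨δ0, hδ0, hδ0p⟩ := Metric.uniformContinuous_iff.mp
    (CompactSpace.uniformContinuous_of_continuous f.continuous) (η / 4) (by linarith)
  -- choose δ from rhoFK = 0
  set c := min δ0 (min 1 (η / (4 * (5 * M + 1)))) with hc_def
  have hc : 0 < c := lt_min hδ0 (lt_min one_pos (by positivity))
  have hTne : {δ : ℝ | 0 < δ ∧ fkDist Φ δ x y < δ}.Nonempty := by
    refine ⟨2, two_pos, ?_⟩
    have hle : fkDist Φ 2 x y ≤ 1 := by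
      apply Filter.limsup_le_of_le
      · exact (isBoundedUnder_of ⟨0, fun t => fkGap_nonneg Φ t 2 x y⟩ :
          IsBoundedUnder (· ≥ ·) atTop _).isCoboundedUnder_le
      · exact Filter.Eventually.of_forall (fun t => fkGap_le_one Φ t 2 x y)
    linarith
  have hsInf : sInf {δ : ℝ | 0 < δ ∧ fkDist Φ δ x y < δ} < c := by
    rw [show sInf {δ : ℝ | 0 < δ ∧ fkDist Φ δ x y < δ} = rhoFK Φ x y from rfl, h]
    exact hc
  obtain ⟨δ, ⟨hδpos, hδlt⟩, hδc⟩ := exists_lt_of_csInf_lt hTne hsInf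
  have hδ1 : δ < 1 := lt_of_lt_of_le hδc (le_trans (min_le_right _ _) (min_le_left _ _))
  have hδδ0 : δ < δ0 := lt_of_lt_of_le hδc (min_le_left _ _)
  have hδη : δ < η / (4 * (5 * M + 1)) :=
    lt_of_lt_of_le hδc (le_trans (min_le_right _ _) (min_le_right _ _))
  have hmod : ∀ a b : X, dist a b < δ → |f a - f b| ≤ η / 4 := by
    intro a b hab
    have := hδ0p (lt_trans hab hδδ0)
    rw [Real.dist_eq] at this
    linarith
  -- eventual matching
  have hbdd : IsBoundedUnder (· ≤ ·) atTop (fun t => fkGap Φ t δ x y) :=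
    isBoundedUnder_of ⟨1, fun t => fkGap_le_one Φ t δ x y⟩
  have hev1 : ∀ᶠ t in atTop, fkGap Φ t δ x y < δ :=
    Filter.eventually_lt_of_limsup_lt hδlt hbdd
  have hev2 : ∀ᶠ t in atTop, dist (∫ z, f z ∂empMeasure Φ x t) L < η / 4 :=
    Metric.tendsto_nhds.mp (hx f) (η / 4) (by linarith)
  filter_upwards [hev1, hev2, eventually_gt_atTop (0 : ℝ)] with t h1 h2 h3
  -- extract a matching
  obtain ⟨e, he, helt⟩ := exists_lt_of_csInf_lt
    (⟨1, mem_union_right _ rfl⟩ : ({ε : ℝ | 0 < ε ∧ Matchable Φ x y t ε δ} ∪ {1}).Nonempty) h1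
  have hematch : 0 < e ∧ Matchable Φ x y t e δ := by
    rcases he with he | he
    · exact he
    · rw [mem_singleton_iff] at he; subst he; linarith
  obtain ⟨hepos, hmatch⟩ := hematch
  -- empirical measure formulas
  have hflow : ∀ z : X, Continuous fun s : ℝ => Φ s z := fun z =>
    hΦ.cont.comp (continuous_id.prodMk continuous_const)
  have hemp : ∀ z : X, ∫ w, f w ∂empMeasure Φ z t = (1 / t) * ∫ s in Icc 0 t, f (Φ s z) := by
    intro z
    rw [empMeasure, integral_smul_measure,
      integral_map ((hflow z).aemeasurable) f.continuous.aestronglyMeasurable,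
      ENNReal.toReal_ofReal (by positivity), smul_eq_mul]
  -- key estimate
  have hkey := key_est Φ hΦ.cont (f : X → ℝ) f.continuous hM0 hM hmod (by linarith)
    hepos (lt_trans helt hδ1) h3 hmatch
  have hMeη : 5 * M * e ≤ η / 4 := by
    have h5 : 5 * M * e ≤ 5 * M * δ := by nlinarith [lt_trans helt hδ1, helt]
    have h6 : 5 * M * δ ≤ η / 4 := by
      have : δ * (4 * (5 * M + 1)) < η := (lt_div_iff₀ (by positivity)).mp hδη
      nlinarith
    linarith
  have hdistE : dist (∫ z, f z ∂empMeasure Φ y t) (∫ z, f z ∂empMeasure Φ x t)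
      ≤ η / 4 + 5 * M * e := by
    rw [Real.dist_eq, hemp x, hemp y, ← mul_sub, abs_mul, abs_of_nonneg (by positivity : (0:ℝ) ≤ 1/t)]
    calc (1 / t) * |(∫ s in Icc 0 t, f (Φ s y)) - ∫ s in Icc 0 t, f (Φ s x)|
        ≤ (1 / t) * (t * (η / 4 + 5 * M * e)) :=
          mul_le_mul_of_nonneg_left hkey (by positivity)
      _ = η / 4 + 5 * M * e := by field_simp
  calc dist (∫ z, f z ∂empMeasure Φ y t) L
      ≤ dist (∫ z, f z ∂empMeasure Φ y t) (∫ z, f z ∂empMeasure Φ x t)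
        + dist (∫ z, f z ∂empMeasure Φ x t) L := dist_triangle _ _ _
    _ ≤ (η / 4 + 5 * M * e) + η / 4 := by linarith
    _ < η := by linarith
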